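/- Let G be a graph containing a spanning subgraph H that is a semiregular bipartite graph with parameters (n₁, n₂, r₁, r₂) where n₁r₁ = n₂r₂ > 0 and n₁ ≤ n₂, and suppose the part of size n₂ of H is also an independent set in G. Then α(G) = n₂. -/

import Mathlib

open Finset

/-- The independence number of a finite simple graph. -/
noncomputable def indepNum {V : Type*} [Fintype V] (G : SimpleGraph V) : ℕ :=
  sSup {k | ∃ S : Finset V, (∀ u ∈ S, ∀ v ∈ S, u ≠ v → ¬ G.Adj u v) ∧ S.card = k}

/-- Example 4.3: if G has a spanning subgraph H which is semiregular bipartite with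
parameters (n₁, n₂, r₁, r₂), n₁r₁ = n₂r₂ > 0, n₁ ≤ n₂, and the part of size n₂ is
independent in G, then α(G) = n₂. -/
theorem stmt18 (V : Type*) [Fintype V] [DecidableEq V]
    (G H : SimpleGraph V) [DecidableRel H.Adj] (hsub : H ≤ G)
    (V₁ V₂ : Finset V) (hpart : V₁ ∪ V₂ = Finset.univ) (hdisj : Disjoint V₁ V₂)
    (hbip : ∀ u v : V, H.Adj u v → (u ∈ V₁ ∧ v ∈ V₂) ∨ (u ∈ V₂ ∧ v ∈ V₁))
    (n₁ n₂ r₁ r₂ : ℕ) (hn₁ : V₁.card = n₁) (hn₂ : V₂.card = n₂)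
    (hr₁ : ∀ u ∈ V₁, H.degree u = r₁) (hr₂ : ∀ u ∈ V₂, H.degree u = r₂)
    (heq : n₁ * r₁ = n₂ * r₂) (hpos : 0 < n₁ * r₁) (hle : n₁ ≤ n₂)
    (hindep : ∀ u ∈ V₂, ∀ v ∈ V₂, u ≠ v → ¬ G.Adj u v) :
    indepNum G = n₂ := by
  have hn₂pos : 0 < n₂ := by
    rcases Nat.eq_zero_or_pos n₂ with h | h
    · rw [heq, h, zero_mul] at hpos; exact absurd hpos (lt_irrefl 0)
    · exact h
  have hr₂pos : 0 < r₂ := by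
    rcases Nat.eq_zero_or_pos r₂ with h | h
    · rw [heq, h, mul_zero] at hpos; exact absurd hpos (lt_irrefl 0)
    · exact h
  have hr₂le : r₂ ≤ r₁ := by
    have h1 : n₂ * r₂ ≤ n₂ * r₁ := by
      rw [← heq]; exact Nat.mul_le_mul_right r₁ hle
    exact Nat.le_of_mul_le_mul_left h1 hn₂pos
  -- key bound for any independent set
  have key : ∀ S : Finset V, (∀ u ∈ S, ∀ v ∈ S, u ≠ v → ¬ G.Adj u v) → S.card ≤ n₂ := by
    intro S hSind
    set A := S ∩ V₁ with hA
    set B := S ∩ V₂ with hB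
    have hScard : S.card = A.card + B.card := by
      have hunion : A ∪ B = S := by
        rw [hA, hB, ← Finset.inter_union_distrib_left, hpart, Finset.inter_univ]
      have hd : Disjoint A B :=
        Finset.disjoint_of_subset_left Finset.inter_subset_right
          (Finset.disjoint_of_subset_right Finset.inter_subset_right hdisj)
      rw [← hunion, Finset.card_union_of_disjoint hd]
    -- no H-edges within S
    have hnoedge : ∀ u ∈ S, ∀ v ∈ S, ¬ H.Adj u v := by
      intro u hu v hv hadj
      exact hSind u hu v hv (H.ne_of_adj hadj) (hsub hadj)
    -- counting set
    set T := (A ×ˢ (V₂ \ B)).filter (fun p => H.Adj p.1 p.2) with hT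
    have hT1 : T.card = A.card * r₁ := by
      have := Finset.card_eq_sum_card_fiberwise (f := fun p : V × V => p.1)
        (s := T) (t := A) (by
          intro p hp
          rw [hT, Finset.mem_coe, Finset.mem_filter, Finset.mem_product] at hp
          exact hp.1.1)
      have hfibcard : ∀ a ∈ A, (T.filter (fun p => p.1 = a)).card = r₁ := ?_
      · rw [this, Finset.sum_congr rfl hfibcard, Finset.sum_const, smul_eq_mul]
      intro a ha
      -- fiber over a has card r₁
      have haV₁ : a ∈ V₁ := (Finset.mem_inter.mp ha).2
      have haS : a ∈ S := (Finset.mem_inter.mp ha).1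
      have hfib : T.filter (fun p => p.1 = a) =
          (H.neighborFinset a).image (fun v => (a, v)) := by
        ext p
        simp only [hT, Finset.mem_filter, Finset.mem_product, Finset.mem_image,
          SimpleGraph.mem_neighborFinset, Finset.mem_sdiff]
        constructor
        · rintro ⟨⟨⟨hpA, hp2⟩, hadj⟩, hp1⟩
          exact ⟨p.2, by rwa [← hp1], by rw [← hp1]⟩
        · rintro ⟨v, hadj, rfl⟩
          have hv2 : v ∈ V₂ := by
            rcases hbip a v hadj with ⟨_, h⟩ | ⟨h, _⟩
            · exact h
            · exact absurd haV₁ (Finset.disjoint_right.mp hdisj h)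
          have hvB : v ∉ B := by
            intro hvB
            exact hnoedge a haS v (Finset.mem_inter.mp hvB).1 hadj
          exact ⟨⟨⟨ha, hv2, hvB⟩, hadj⟩, rfl⟩
      rw [hfib, Finset.card_image_of_injective _ (fun x y h => by
        simpa using congrArg Prod.snd h)]
      rw [SimpleGraph.card_neighborFinset_eq_degree]
      exact hr₁ a haV₁
    have hT2 : T.card ≤ (V₂ \ B).card * r₂ := by
      have := Finset.card_eq_sum_card_fiberwise (f := fun p : V × V => p.2)
        (s := T) (t := V₂ \ B) (by
          intro p hp
          rw [hT, Finset.mem_coe, Finset.mem_filter, Finset.mem_product] at hp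
          exact hp.1.2)
      rw [this]
      calc ∑ v ∈ V₂ \ B, (T.filter (fun p => p.2 = v)).card
          ≤ ∑ v ∈ V₂ \ B, r₂ := by
            apply Finset.sum_le_sum
            intro v hv
            have hv2 : v ∈ V₂ := (Finset.mem_sdiff.mp hv).1
            have hsub2 : T.filter (fun p => p.2 = v) ⊆
                (H.neighborFinset v).image (fun u => (u, v)) := by
              intro p hp
              rw [Finset.mem_filter, hT, Finset.mem_filter] at hp
              obtain ⟨⟨_, hadj⟩, hp2⟩ := hp
              rw [Finset.mem_image]
              refine ⟨p.1, ?_, ?_⟩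
              · rw [SimpleGraph.mem_neighborFinset, ← hp2]
                exact hadj.symm
              · rw [← hp2]
            calc (T.filter (fun p => p.2 = v)).card
                ≤ ((H.neighborFinset v).image (fun u => (u, v))).card :=
                  Finset.card_le_card hsub2
              _ ≤ (H.neighborFinset v).card := Finset.card_image_le
              _ = r₂ := by
                  rw [SimpleGraph.card_neighborFinset_eq_degree]; exact hr₂ v hv2
        _ = (V₂ \ B).card * r₂ := by rw [Finset.sum_const, smul_eq_mul]
    have hBsub : B ⊆ V₂ := Finset.inter_subset_right
    have hBcard : (V₂ \ B).card = n₂ - B.card := by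
      rw [Finset.card_sdiff_of_subset hBsub, hn₂]
    have hA2 : A.card * r₂ ≤ (n₂ - B.card) * r₂ := by
      calc A.card * r₂ ≤ A.card * r₁ := Nat.mul_le_mul_left _ hr₂le
        _ = T.card := hT1.symm
        _ ≤ (V₂ \ B).card * r₂ := hT2
        _ = (n₂ - B.card) * r₂ := by rw [hBcard]
    have hAle : A.card ≤ n₂ - B.card := Nat.le_of_mul_le_mul_right hA2 hr₂pos
    have hBle : B.card ≤ n₂ := hn₂ ▸ Finset.card_le_card hBsub
    omega
  -- conclude
  have hmem : n₂ ∈ {k | ∃ S : Finset V, (∀ u ∈ S, ∀ v ∈ S, u ≠ v → ¬ G.Adj u v) ∧ S.card = k} :=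
    ⟨V₂, hindep, hn₂⟩
  have hub : ∀ k ∈ {k | ∃ S : Finset V, (∀ u ∈ S, ∀ v ∈ S, u ≠ v → ¬ G.Adj u v) ∧ S.card = k},
      k ≤ n₂ := by
    rintro k ⟨S, hSind, rfl⟩
    exact key S hSind
  apply le_antisymm
  · exact csSup_le ⟨n₂, hmem⟩ hub
  · exact le_csSup ⟨n₂, hub⟩ hmem
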